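/- Let q₁, q₂ > 0, σ₁, σ₂ > 0 and r ∈ (−1,1), and let Σ be the 2×2 covariance matrix with entries Σ₁₁ = σ₁², Σ₂₂ = σ₂², Σ₁₂ = Σ₂₁ = r σ₁ σ₂. If r ≥ c where c := min{(q₁ σ₂)/(σ₁ q₂), (σ₁ q₂)/(q₁ σ₂)}, then inf_{v₁ ≥ q₁, v₂ ≥ q₂} ⟨v, Σ⁻¹ v⟩ = max{q₁²/σ₁², q₂²/σ₂²}. -/
import Mathlib


open Matrix

theorem bivariate_quadratic_program_high_correlation (σ₁ σ₂ q₁ q₂ r : ℝ)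
    (hσ₁ : 0 < σ₁) (hσ₂ : 0 < σ₂) (hq₁ : 0 < q₁) (hq₂ : 0 < q₂)
    (hr : r ∈ Set.Ioo (-1 : ℝ) 1)
    (Sig : Matrix (Fin 2) (Fin 2) ℝ)
    (hSig : Sig = !![σ₁ ^ 2, r * σ₁ * σ₂; r * σ₁ * σ₂, σ₂ ^ 2])
    (c : ℝ) (hc : c = min ((q₁ * σ₂) / (σ₁ * q₂)) ((σ₁ * q₂) / (q₁ * σ₂)))
    (hrc : c ≤ r) :
    sInf {x : ℝ | ∃ v : Fin 2 → ℝ, q₁ ≤ v 0 ∧ q₂ ≤ v 1 ∧ x = v ⬝ᵥ Sig⁻¹.mulVec v} =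
      max (q₁ ^ 2 / σ₁ ^ 2) (q₂ ^ 2 / σ₂ ^ 2) := by
  obtain ⟨hr1, hr2⟩ := hr
  have hr2' : r ^ 2 < 1 := by nlinarith
  have h1r : (0:ℝ) < 1 - r ^ 2 := by linarith
  have hD : 0 < σ₁ ^ 2 * σ₂ ^ 2 * (1 - r ^ 2) := by positivity
  have hdet : Sig.det = σ₁ ^ 2 * σ₂ ^ 2 * (1 - r ^ 2) := by
    rw [hSig, Matrix.det_fin_two_of]; ring
  have hQ : ∀ v : Fin 2 → ℝ, v ⬝ᵥ Sig⁻¹.mulVec v =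
      ((v 0) ^ 2 * σ₂ ^ 2 - 2 * r * σ₁ * σ₂ * (v 0) * (v 1) + (v 1) ^ 2 * σ₁ ^ 2)
        / (σ₁ ^ 2 * σ₂ ^ 2 * (1 - r ^ 2)) := by
    intro v
    have hne1 : -(σ₂ ^ 2 * r ^ 2 * σ₁ ^ 2) + σ₂ ^ 2 * σ₁ ^ 2 ≠ 0 := by nlinarith
    have hne2 : σ₂ ^ 2 * σ₁ ^ 2 - σ₂ ^ 2 * r ^ 2 * σ₁ ^ 2 ≠ 0 := by nlinarith
    rw [Matrix.inv_def, hdet]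
    rw [hSig, Matrix.adjugate_fin_two_of]
    simp [Matrix.mulVec, dotProduct, Fin.sum_univ_two, Matrix.smul_apply]
    field_simp [hne1, hne2, hD.ne']
    ring
  have hrpos : 0 < r := by
    have hcpos : 0 < c := by
      rw [hc]
      apply lt_min <;> positivity
    linarith
  apply IsLeast.csInf_eq
  constructor
  · -- membership
    rcases le_total (σ₁ * q₂) (q₁ * σ₂) with h | h
    · -- q₁/σ₁ ≥ q₂/σ₂, optimum is q₁²/σ₁²
      have hsq : q₂ ^ 2 * σ₁ ^ 2 ≤ q₁ ^ 2 * σ₂ ^ 2 := by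
        nlinarith [mul_le_mul h h (by positivity : (0:ℝ) ≤ σ₁ * q₂)
          (by positivity : (0:ℝ) ≤ q₁ * σ₂)]
      have hmax : max (q₁ ^ 2 / σ₁ ^ 2) (q₂ ^ 2 / σ₂ ^ 2) = q₁ ^ 2 / σ₁ ^ 2 := by
        rw [max_eq_left]
        rw [div_le_div_iff₀ (by positivity) (by positivity)]
        linarith
      have hcB : c = σ₁ * q₂ / (q₁ * σ₂) := by
        rw [hc, min_eq_right]
        have hB1 : σ₁ * q₂ / (q₁ * σ₂) ≤ 1 := (div_le_one (by positivity)).mpr h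
        have hA1 : (1:ℝ) ≤ q₁ * σ₂ / (σ₁ * q₂) := (one_le_div (by positivity)).mpr h
        linarith
      have hcle : σ₁ * q₂ / (q₁ * σ₂) ≤ r := hcB ▸ hrc
      refine ⟨![q₁, r * σ₂ * q₁ / σ₁], le_refl _, ?_, ?_⟩
      · show q₂ ≤ r * σ₂ * q₁ / σ₁
        rw [le_div_iff₀ hσ₁]
        rw [div_le_iff₀ (by positivity)] at hcle
        nlinarith
      · rw [hQ]
        simp only [Matrix.cons_val_zero, Matrix.cons_val_one, Matrix.head_cons]
        rw [hmax]
        field_simp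
        ring
    · have hsq : q₁ ^ 2 * σ₂ ^ 2 ≤ q₂ ^ 2 * σ₁ ^ 2 := by
        nlinarith [mul_le_mul h h (by positivity : (0:ℝ) ≤ q₁ * σ₂)
          (by positivity : (0:ℝ) ≤ σ₁ * q₂)]
      have hmax : max (q₁ ^ 2 / σ₁ ^ 2) (q₂ ^ 2 / σ₂ ^ 2) = q₂ ^ 2 / σ₂ ^ 2 := by
        rw [max_eq_right]
        rw [div_le_div_iff₀ (by positivity) (by positivity)]
        linarith
      have hcB : c = q₁ * σ₂ / (σ₁ * q₂) := by
        rw [hc, min_eq_left]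
        have hB1 : q₁ * σ₂ / (σ₁ * q₂) ≤ 1 := (div_le_one (by positivity)).mpr h
        have hA1 : (1:ℝ) ≤ σ₁ * q₂ / (q₁ * σ₂) := (one_le_div (by positivity)).mpr h
        linarith
      have hcle : q₁ * σ₂ / (σ₁ * q₂) ≤ r := hcB ▸ hrc
      refine ⟨![r * σ₁ * q₂ / σ₂, q₂], ?_, le_refl _, ?_⟩
      · show q₁ ≤ r * σ₁ * q₂ / σ₂
        rw [le_div_iff₀ hσ₂]
        rw [div_le_iff₀ (by positivity)] at hcle
        nlinarith
      · rw [hQ]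
        simp only [Matrix.cons_val_zero, Matrix.cons_val_one, Matrix.head_cons]
        rw [hmax]
        field_simp
        ring
  · -- lower bound
    rintro x ⟨v, h1, h2, rfl⟩
    rw [hQ]
    set a := v 0
    set b := v 1
    clear hQ hdet hSig hc hrc
    have ha2 : q₁ ^ 2 ≤ a ^ 2 := by nlinarith
    have hb2 : q₂ ^ 2 ≤ b ^ 2 := by nlinarith
    apply max_le
    · rw [div_le_div_iff₀ (by positivity) hD]
      have key : (a ^ 2 * σ₂ ^ 2 - 2 * r * σ₁ * σ₂ * a * b + b ^ 2 * σ₁ ^ 2) * σ₁ ^ 2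
          - q₁ ^ 2 * (σ₁ ^ 2 * σ₂ ^ 2 * (1 - r ^ 2))
          = σ₁ ^ 2 * (b * σ₁ - r * a * σ₂) ^ 2
            + (a ^ 2 - q₁ ^ 2) * (σ₁ ^ 2 * σ₂ ^ 2 * (1 - r ^ 2)) := by ring
      linarith [mul_nonneg (sq_nonneg σ₁) (sq_nonneg (b * σ₁ - r * a * σ₂)),
        mul_nonneg (sub_nonneg.mpr ha2) hD.le]
    · rw [div_le_div_iff₀ (by positivity) hD]
      have key : (a ^ 2 * σ₂ ^ 2 - 2 * r * σ₁ * σ₂ * a * b + b ^ 2 * σ₁ ^ 2) * σ₂ ^ 2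
          - q₂ ^ 2 * (σ₁ ^ 2 * σ₂ ^ 2 * (1 - r ^ 2))
          = σ₂ ^ 2 * (a * σ₂ - r * b * σ₁) ^ 2
            + (b ^ 2 - q₂ ^ 2) * (σ₁ ^ 2 * σ₂ ^ 2 * (1 - r ^ 2)) := by ring
      linarith [mul_nonneg (sq_nonneg σ₂) (sq_nonneg (a * σ₂ - r * b * σ₁)),
        mul_nonneg (sub_nonneg.mpr hb2) hD.le]
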